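/- Let d ≥ 3 and let z_1, …, z_d ∈ ℤ^d be a basis of ℤ^d such that z̲_2, …, z̲_d are linearly independent in ℝ^{d−1} and |z̲_1| ≤ |z̲_2| ≤ |z̲_3| with z̲_1 ≠ 0. Then for each α ∈ 𝔖_2 we have ⟨α, z_1⟩ · ⟨α_2, z_1⟩ > 0. -/

import Mathlib

open scoped InnerProductSpace

noncomputable section

/-- `ℝ^n` with the Euclidean structure. -/
abbrev E (n : ℕ) : Type := EuclideanSpace ℝ (Fin n)

/-- The projection `x ↦ x̲` forgetting the last coordinate. -/
def pr (d : ℕ) (x : E d) : E (d - 1) :=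
  WithLp.toLp 2 (fun i : Fin (d - 1) => x (Fin.castLE (Nat.sub_le d 1) i))

/-- The canonical embedding of `ℤ^d` into `ℝ^d`. -/
def toE (d : ℕ) (z : Fin d → ℤ) : E d := WithLp.toLp 2 (fun i => (z i : ℝ))

/-- The `m`-dimensional volume of the parallelepiped spanned by `v 0, …, v (m-1)`
(square root of the Gram determinant). -/
def gramVol {n m : ℕ} (v : Fin m → E n) : ℝ :=
  Real.sqrt ((Matrix.of (fun i j : Fin m => ⟪v i, v j⟫_ℝ)).det)

/-- `z` is a best approximation vector for the linear form `L_α : x ↦ ⟪α, x⟫`. -/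
def IsBestApprox (d : ℕ) (α : E d) (z : Fin d → ℤ) : Prop :=
  pr d (toE d z) ≠ 0 ∧
  ∀ z' : Fin d → ℤ, pr d (toE d z') ≠ 0 →
    (‖pr d (toE d z')‖ ≤ ‖pr d (toE d z)‖ → |⟪α, toE d z⟫_ℝ| ≤ |⟪α, toE d z'⟫_ℝ|) ∧
    (‖pr d (toE d z')‖ < ‖pr d (toE d z)‖ → |⟪α, toE d z⟫_ℝ| < |⟪α, toE d z'⟫_ℝ|)

/-- `det Λ̲_{k,l}` for a sequence of integer vectors: the `l`-dimensional volume of the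
parallelepiped spanned by `z̲_k, …, z̲_{k+l-1}`. -/
def detL (d : ℕ) (z : ℕ → Fin d → ℤ) (k l : ℕ) : ℝ :=
  gramVol (fun i : Fin l => pr d (toE d (z (k + i.1))))

/-- `D_{k,l} = det Λ̲_{k,l} / |z̲_k|^l`. -/
def Dq (d : ℕ) (z : ℕ → Fin d → ℤ) (k l : ℕ) : ℝ :=
  detL d z k l / ‖pr d (toE d (z k))‖ ^ l

/-- `B_k = |z̲_{k+1}| / |z̲_k|`. -/
def Bq (d : ℕ) (z : ℕ → Fin d → ℤ) (k : ℕ) : ℝ :=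
  ‖pr d (toE d (z (k + 1)))‖ / ‖pr d (toE d (z k))‖

/-- `R_k = 1 / (2 |z̲_{k+1}| det Λ̲_{k,d-1})`. -/
def Rq (d : ℕ) (z : ℕ → Fin d → ℤ) (k : ℕ) : ℝ :=
  1 / (2 * ‖pr d (toE d (z (k + 1)))‖ * detL d z k (d - 1))

/-- `v 0, …, v (d-1)` form a basis of the lattice `ℤ^d`. -/
def IsZBasis (d : ℕ) (v : Fin d → Fin d → ℤ) : Prop :=
  IsUnit ((Matrix.of (fun i j : Fin d => v j i)).det)

/-- Auxiliary: the norm of the projection is at most the norm. -/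
lemma pr_norm_le_aux {n : ℕ} (x : E (n+1)) : ‖pr (n+1) x‖ ≤ ‖x‖ := by
  rw [EuclideanSpace.norm_eq, EuclideanSpace.norm_eq]
  apply Real.sqrt_le_sqrt
  have h0 : (∑ i : Fin (n+1-1), ‖pr (n+1) x i‖ ^ 2) = ∑ i : Fin n, ‖x (Fin.castSucc i)‖ ^ 2 :=
    rfl
  rw [h0, Fin.sum_univ_castSucc (f := fun i => ‖x i‖ ^ 2)]
  have := sq_nonneg ‖x (Fin.last n)‖
  linarith

open Matrix in
/-- Auxiliary key identity: `|⟪α₂, z₁⟫| ⋅ det Λ̲_{2,n} = 1`. -/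
lemma key_aux (n : ℕ) (z : ℕ → Fin (n+1) → ℤ)
    (hbasis : IsZBasis (n+1) (fun j => z (j.1 + 1)))
    (α2 : E (n+1)) (hlast : α2 (Fin.last n) = 1)
    (hperp : ∀ i : Fin n, ⟪α2, toE (n+1) (z (i.1 + 2))⟫_ℝ = 0) :
    |⟪α2, toE (n+1) (z 1)⟫_ℝ| * detL (n+1) z 2 n = 1 := by
  set c := ⟪α2, toE (n+1) (z 1)⟫_ℝ with hcdef
  set A : Matrix (Fin (n+1)) (Fin (n+1)) ℝ :=
    (Matrix.of fun i j : Fin (n+1) => z (j.1+1) i).map (Int.cast) with hAdef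
  have hdetA : |A.det| = 1 := by
    have hU : IsUnit ((Matrix.of fun i j : Fin (n+1) => z (j.1+1) i).det) := hbasis
    rw [Int.isUnit_iff] at hU
    have hmap : A.det = (((Matrix.of fun i j : Fin (n+1) => z (j.1+1) i).det : ℤ) : ℝ) :=
      (RingHom.map_det (Int.castRingHom ℝ) _).symm
    rcases hU with h | h <;> rw [hmap, h] <;> norm_num
  set N : Matrix (Fin n) (Fin n) ℝ :=
    Matrix.of fun i j : Fin n => (z (2 + j.1) (Fin.castSucc i) : ℝ) with hNdef
  have hdetL : detL (n+1) z 2 n = |N.det| := by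
    have hG : (Matrix.of fun i j : Fin n =>
        ⟪pr (n+1) (toE (n+1) (z (2 + i.1))), pr (n+1) (toE (n+1) (z (2 + j.1)))⟫_ℝ)
        = Nᵀ * N := by
      ext i j
      simp only [Matrix.of_apply, Matrix.mul_apply, Matrix.transpose_apply, hNdef,
        PiLp.inner_apply, RCLike.inner_apply, conj_trivial]
      exact Finset.sum_congr rfl (fun _ _ => mul_comm _ _)
    unfold detL gramVol
    rw [hG, Matrix.det_mul, Matrix.det_transpose, ← sq, Real.sqrt_sq_eq_abs]
  have hmain : |c| * |N.det| = |A.det| := by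
    set e : (Fin n ⊕ Fin 1) ≃ Fin (n+1) := finSumFinEquiv with hedef
    set f : (Fin n ⊕ Fin 1) ≃ Fin (n+1) := finSumFinEquiv.trans (finRotate (n+1)) with hfdef
    set Ah : Matrix (Fin n ⊕ Fin 1) (Fin n ⊕ Fin 1) ℝ := A.submatrix e f with hAhdef
    have hAdet : |Ah.det| = |A.det| := by
      have h1 : Ah = (A.submatrix e e).submatrix id (f.trans e.symm) := by
        ext i j; simp [hAhdef, Matrix.submatrix_apply]
      rw [h1, Matrix.det_permute' (f.trans e.symm) (A.submatrix e e),
        Matrix.det_submatrix_equiv_self, abs_mul]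
      rcases Int.units_eq_one_or (Equiv.Perm.sign (f.trans e.symm)) with h | h <;>
        rw [h] <;> norm_num
    set T12 : Matrix (Fin n) (Fin 1) ℝ := Matrix.of fun i _ => (z 1 (Fin.castSucc i) : ℝ)
      with hT12
    set T21 : Matrix (Fin 1) (Fin n) ℝ := Matrix.of fun _ j => (z (2 + j.1) (Fin.last n) : ℝ)
      with hT21
    set T22 : Matrix (Fin 1) (Fin 1) ℝ := Matrix.of fun _ _ => (z 1 (Fin.last n) : ℝ) with hT22
    have hnat0 : (Fin.natAdd n (0 : Fin 1) : Fin (n+1)) = Fin.last n := by ext; simp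
    have hvlast : ((Fin.natAdd n (0 : Fin 1) + 1 : Fin (n+1))).1 = 0 := by
      rw [hnat0, Fin.last_add_one]; rfl
    have hvcast : ∀ j : Fin n, ((Fin.castAdd 1 j + 1 : Fin (n+1))).1 = j.1 + 1 := by
      intro j
      have h1 : (Fin.castAdd 1 j : Fin (n+1)) = Fin.castSucc j := rfl
      rw [h1, Fin.val_add_one_of_lt (Fin.castSucc_lt_last j), Fin.coe_castSucc]
    have hAh : Ah = fromBlocks N T12 T21 T22 := by
      ext i j
      rcases i with i | i <;> rcases j with j | j <;>
        simp only [hAhdef, Matrix.submatrix_apply, hedef, hfdef, Equiv.trans_apply,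
          finSumFinEquiv_apply_left, finSumFinEquiv_apply_right, finRotate_succ_apply,
          hAdef, hNdef, hT12, hT21, hT22, Matrix.map_apply, Matrix.of_apply,
          Matrix.fromBlocks_apply₁₁, Matrix.fromBlocks_apply₁₂,
          Matrix.fromBlocks_apply₂₁, Matrix.fromBlocks_apply₂₂]
      · rw [hvcast j]
        have : (2 : ℕ) + j.1 = j.1 + 1 + 1 := by omega
        rw [this]; rfl
      · have hj : j = 0 := Subsingleton.elim _ _
        subst hj; rw [hvlast]; rfl
      · have hi : i = 0 := Subsingleton.elim _ _
        subst hi; rw [hvcast j, hnat0]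
        have : (2 : ℕ) + j.1 = j.1 + 1 + 1 := by omega
        rw [this]
      · have hi : i = 0 := Subsingleton.elim _ _
        have hj : j = 0 := Subsingleton.elim _ _
        subst hi; subst hj; rw [hvlast, hnat0]
    set B : Matrix (Fin 1) (Fin n) ℝ := Matrix.of fun _ i => α2 (Fin.castSucc i) with hB
    set Pt : Matrix (Fin n ⊕ Fin 1) (Fin n ⊕ Fin 1) ℝ := fromBlocks 1 0 B 1 with hPt
    have hPtdet : Pt.det = 1 := by
      rw [hPt, Matrix.det_fromBlocks_zero₁₂]; simp
    have hQ : Pt * Ah = fromBlocks N T12 0 (Matrix.of fun _ _ => c) := by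
      rw [hPt, hAh, Matrix.fromBlocks_multiply, Matrix.fromBlocks_inj]
      refine ⟨by simp, by simp, ?_, ?_⟩
      · ext i j
        have hp := hperp j
        rw [PiLp.inner_apply] at hp
        simp only [RCLike.inner_apply, conj_trivial, toE] at hp
        rw [Fin.sum_univ_castSucc, hlast, mul_one] at hp
        have h2 : (2 : ℕ) + j.1 = j.1 + 2 := by omega
        simp only [Matrix.add_apply, Matrix.mul_apply, hB, hNdef, hT21,
          Matrix.of_apply, Matrix.zero_apply, Matrix.one_mul, h2]
        simpa only [mul_comm] using hp
      · ext i j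
        have hp : c = ∑ k : Fin (n+1), α2 k * ((z 1 k : ℤ) : ℝ) := by
          rw [hcdef, PiLp.inner_apply]
          simp [RCLike.inner_apply, toE, mul_comm]
        rw [Fin.sum_univ_castSucc, hlast, one_mul] at hp
        simp only [Matrix.add_apply, Matrix.mul_apply, hB, hT12, hT22,
          Matrix.of_apply, Matrix.one_mul]
        exact hp.symm
    have hdetQ : (Pt * Ah).det = N.det * c := by
      rw [hQ, Matrix.det_fromBlocks_zero₂₁, Matrix.det_fin_one]
      rfl
    rw [Matrix.det_mul, hPtdet, one_mul] at hdetQ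
    rw [← hAdet, hdetQ, abs_mul, mul_comm]
  rw [hdetL]
  rw [hmain, hdetA]

theorem stmt7 (d : ℕ) (hd : 3 ≤ d) (z : ℕ → Fin d → ℤ)
    (hbasis : IsZBasis d (fun j => z (j.1 + 1)))
    (hlip : LinearIndependent ℝ (fun i : Fin (d - 1) => pr d (toE d (z (i.1 + 2)))))
    (hz1 : pr d (toE d (z 1)) ≠ 0)
    (h12 : ‖pr d (toE d (z 1))‖ ≤ ‖pr d (toE d (z 2))‖)
    (h23 : ‖pr d (toE d (z 2))‖ ≤ ‖pr d (toE d (z 3))‖)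
    (α2 : E d) (hα2pi : α2 ⟨d - 1, by omega⟩ = 1)
    (hα2perp : ∀ i : Fin (d - 1), ⟪α2, toE d (z (i.1 + 2))⟫_ℝ = 0)
    (α : E d) (hαpi : α ⟨d - 1, by omega⟩ = 1) (hαS : ‖α - α2‖ ≤ Rq d z 2) :
    0 < ⟪α, toE d (z 1)⟫_ℝ * ⟪α2, toE d (z 1)⟫_ℝ := by
  obtain ⟨n, rfl⟩ : ∃ n, d = n + 1 := ⟨d - 1, by omega⟩
  have hlast2 : α2 (Fin.last n) = 1 := hα2pi
  have hlastα : α (Fin.last n) = 1 := hαpi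
  set c := ⟪α2, toE (n+1) (z 1)⟫_ℝ with hcdef
  set a := ⟪α, toE (n+1) (z 1)⟫_ℝ with hadef
  set δ := ⟪α - α2, toE (n+1) (z 1)⟫_ℝ with hδdef
  set L := detL (n+1) z 2 n with hLdef
  have hkey : |c| * L = 1 := key_aux n z hbasis α2 hlast2 hα2perp
  have hL0 : 0 ≤ L := Real.sqrt_nonneg _
  have hLpos : 0 < L := by
    rcases hL0.lt_or_eq with h | h
    · exact h
    · rw [← h, mul_zero] at hkey; norm_num at hkey
  have hcabs : |c| = 1 / L := by
    field_simp
    linarith [hkey]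
  have hz1n : 0 < ‖pr (n+1) (toE (n+1) (z 1))‖ := norm_pos_iff.mpr hz1
  have hz3n : 0 < ‖pr (n+1) (toE (n+1) (z 3))‖ := lt_of_lt_of_le hz1n (h12.trans h23)
  -- δ only sees the projections
  have hδeq : δ = ⟪pr (n+1) (α - α2), pr (n+1) (toE (n+1) (z 1))⟫_ℝ := by
    rw [hδdef, PiLp.inner_apply, PiLp.inner_apply]
    simp only [RCLike.inner_apply, conj_trivial]
    rw [Fin.sum_univ_castSucc]
    have hlast0 : (α - α2) (Fin.last n) = 0 := by
      have h : (α - α2) (Fin.last n) = α (Fin.last n) - α2 (Fin.last n) := rfl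
      rw [h, hlastα, hlast2, sub_self]
    rw [hlast0, mul_zero, add_zero]
    rfl
  have hRq : Rq (n+1) z 2 = 1 / (2 * ‖pr (n+1) (toE (n+1) (z 3))‖ * L) := rfl
  have hδle : |δ| ≤ 1 / (2 * L) := by
    have h1 : |δ| ≤ ‖α - α2‖ * ‖pr (n+1) (toE (n+1) (z 1))‖ := by
      rw [hδeq]
      exact le_trans (abs_real_inner_le_norm _ _)
        (mul_le_mul_of_nonneg_right (pr_norm_le_aux _) (norm_nonneg _))
    have h2 : ‖α - α2‖ * ‖pr (n+1) (toE (n+1) (z 1))‖ ≤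
        (1 / (2 * ‖pr (n+1) (toE (n+1) (z 3))‖ * L)) * ‖pr (n+1) (toE (n+1) (z 3))‖ := by
      apply mul_le_mul (hαS.trans_eq hRq) (h12.trans h23) (norm_nonneg _)
      positivity
    have h3 : (1 / (2 * ‖pr (n+1) (toE (n+1) (z 3))‖ * L)) * ‖pr (n+1) (toE (n+1) (z 3))‖
        = 1 / (2 * L) := by
      field_simp
    linarith
  have haeq : a = c + δ := by
    rw [hδdef, inner_sub_left, ← hadef, ← hcdef]; ring
  have h2 : -(|δ| * |c|) ≤ δ * c := by rw [← abs_mul]; exact neg_abs_le _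
  set r : ℝ := 1 / L with hrdef
  have hr : 0 < r := by positivity
  have hcc : c * c = r * r := by rw [← abs_mul_abs_self c, hcabs]
  have hhalf : 1 / (2 * L) = r / 2 := by rw [hrdef]; field_simp
  have h4 : |δ| * |c| ≤ (r / 2) * r := by
    rw [hcabs]
    exact mul_le_mul_of_nonneg_right (hδle.trans_eq hhalf) hr.le
  have hexp : (c + δ) * c = c * c + δ * c := by ring
  have hrr : 0 < r * r := mul_pos hr hr
  rw [haeq, hexp]
  nlinarith [h2, h4, hcc, hrr]
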